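/- The doubling construction produces a Hamiltonian cycle system of order 4n+1: given three HCS(2n+1) H₁, H₂, H₃ on vertex set {∞} ∪ [2n] with cycles A_i = (∞, α_{i,1}, …, α_{i,2n}), B_i = (∞, β_{i,1}, …, β_{i,2n}), C_i = (∞, γ_{i,1}, …, γ_{i,2n}) for i ∈ [n], satisfying α_{i,1} = β_{i,1} = γ_{i,1} and α_{i,2n} = β_{i,2n} = γ_{i,2n} for all i, the collection T of 2n cycles T_{i,1} = (∞, a_{i,1}, …, a_{i,2n}, b'_{i,2n}, …, b'_{i,1}) and T_{i,2} = (∞, c_{i,2n}, c'_{i,2n-1}, c_{i,2n-2}, …, c'_{i,1}, c_{i,1}, c'_{i,2}, c_{i,3}, …, c'_{i,2n}) on vertex set {∞} ∪ ([2n] × {1,−1}) is a Hamiltonian cycle system of order 4n+1, where a_{i,j} = (α_{i,j}, 1), b_{i,j} = (β_{i,j}, 1), c_{i,j} = (γ_{i,j}, 1) and z' denotes (x, −y) for z = (x, y). -/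

import Mathlib

open Pointwise

variable {V : Type*}

/-- The action of a permutation on a simple graph by relabelling vertices. -/
instance permGraphAction : MulAction (Equiv.Perm V) (SimpleGraph V) where
  smul σ H := H.map σ.toEmbedding
  one_smul H := by
    show H.map (1 : Equiv.Perm V).toEmbedding = H
    ext a b
    simp [SimpleGraph.map_adj]
  mul_smul σ τ H := by
    ext a b
    show (H.map (σ * τ).toEmbedding).Adj a b ↔ ((H.map τ.toEmbedding).map σ.toEmbedding).Adj a b
    rw [SimpleGraph.map_adj, SimpleGraph.map_adj]
    simp only [SimpleGraph.map_adj, Equiv.coe_toEmbedding, Equiv.Perm.coe_mul,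
      Function.comp_apply]
    constructor
    · rintro ⟨u, v, h, rfl, rfl⟩
      exact ⟨τ u, τ v, (SimpleGraph.map_adj τ.toEmbedding H _ _).2 ⟨u, v, h, rfl, rfl⟩, rfl, rfl⟩
    · rintro ⟨x, y, hm, rfl, rfl⟩
      obtain ⟨u, v, h, rfl, rfl⟩ := (SimpleGraph.map_adj τ.toEmbedding H x y).1 hm
      exact ⟨u, v, h, rfl, rfl⟩

lemma perm_smul_graph (σ : Equiv.Perm V) (H : SimpleGraph V) :
    σ • H = H.map σ.toEmbedding := rfl

/-- A Hamiltonian cycle of the complete graph on `V`: a connected, 2-regular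
(spanning) subgraph. -/
def IsHamCycle [Fintype V] (H : SimpleGraph V) : Prop :=
  H.Connected ∧ ∀ v : V, (H.neighborSet v).ncard = 2

/-- A Hamiltonian cycle system: a set of Hamiltonian cycles whose edge sets
partition the edge set of the complete graph. -/
def IsHCS [Fintype V] (𝓗 : Set (SimpleGraph V)) : Prop :=
  (∀ H ∈ 𝓗, IsHamCycle H) ∧
    ∀ e ∈ (⊤ : SimpleGraph V).edgeSet, ∃! H, H ∈ 𝓗 ∧ e ∈ H.edgeSet

/-- The full automorphism group of a Hamiltonian cycle system, as the subgroup
of vertex permutations preserving the set of cycles. -/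
def autHCS (𝓗 : Set (SimpleGraph V)) : Subgroup (Equiv.Perm V) :=
  MulAction.stabilizer (Equiv.Perm V) 𝓗

/-- The cycle graph traced by a map from `ZMod m` (consecutive residues are adjacent). -/
def cycleOn {W : Type*} (m : ℕ) (f : ZMod m → W) : SimpleGraph W :=
  SimpleGraph.fromRel (fun a b => ∃ i : ZMod m, f i = a ∧ f (i + 1) = b)

/-- First-type cycle of the doubling construction, as a map `ZMod (4n+1) → {∞} ∪ ([2n]×{±1})`
(`none` is `∞`, `true` is sign `+1`). -/
def doubleT1 (n : ℕ) (A B : ZMod (2*n+1) → Option (Fin (2*n)))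
    (k : ZMod (4*n+1)) : Option (Fin (2*n) × Bool) :=
  if k.val = 0 then none
  else if k.val ≤ 2*n then (A ((k.val : ℕ) : ZMod (2*n+1))).map (fun x => (x, true))
  else (B (((4*n+1-k.val : ℕ)) : ZMod (2*n+1))).map (fun x => (x, false))

/-- Second-type cycle of the doubling construction. -/
def doubleT2 (n : ℕ) (C : ZMod (2*n+1) → Option (Fin (2*n)))
    (k : ZMod (4*n+1)) : Option (Fin (2*n) × Bool) :=
  if k.val = 0 then none
  else if k.val ≤ 2*n then
    (C (((2*n+1-k.val : ℕ)) : ZMod (2*n+1))).map (fun x => (x, decide (k.val % 2 = 1)))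
  else (C (((k.val - 2*n : ℕ)) : ZMod (2*n+1))).map (fun x => (x, decide ((k.val - 2*n) % 2 = 1)))

section gen
variable {W : Type*} {m : ℕ} {f : ZMod m → W}

lemma zmod_natCast_ne_zero (hm : 1 ≤ m) {a : ℕ} (h1 : 1 ≤ a) (h2 : a < m) :
    ((a : ℕ) : ZMod m) ≠ 0 := by
  rw [Ne, ZMod.natCast_eq_zero_iff]
  intro hdvd
  exact absurd (Nat.le_of_dvd (by omega) hdvd) (by omega)

lemma zmod_one_ne_zero (hm : 3 ≤ m) : (1 : ZMod m) ≠ 0 := by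
  have := zmod_natCast_ne_zero (a := 1) (by omega : 1 ≤ m) le_rfl (by omega)
  simpa using this

lemma zmod_two_ne_zero (hm : 3 ≤ m) : (2 : ZMod m) ≠ 0 := by
  have := zmod_natCast_ne_zero (a := 2) (by omega : 1 ≤ m) (by omega) (by omega)
  simpa using this

lemma cycleOn_adj (hm : 3 ≤ m) (hf : Function.Injective f) {a b : W} :
    (cycleOn m f).Adj a b ↔
      ∃ i, (f i = a ∧ f (i + 1) = b) ∨ (f i = b ∧ f (i + 1) = a) := by
  rw [cycleOn, SimpleGraph.fromRel_adj]
  constructor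
  · rintro ⟨-, h | h⟩
    · obtain ⟨i, h⟩ := h; exact ⟨i, Or.inl h⟩
    · obtain ⟨i, h⟩ := h; exact ⟨i, Or.inr h⟩
  · rintro ⟨i, h⟩
    have hne : f i ≠ f (i + 1) := by
      intro h'
      exact zmod_one_ne_zero hm (left_eq_add.mp (hf h'))
    rcases h with ⟨ha, hb⟩ | ⟨ha, hb⟩
    · exact ⟨by rw [← ha, ← hb]; exact hne, Or.inl ⟨i, ha, hb⟩⟩
    · exact ⟨by rw [← ha, ← hb]; exact hne.symm, Or.inr ⟨i, ha, hb⟩⟩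

lemma cycleOn_neighborSet (hm : 3 ≤ m) (hf : Function.Injective f)
    (i : ZMod m) : (cycleOn m f).neighborSet (f i) = {f (i + 1), f (i - 1)} := by
  ext b
  simp only [SimpleGraph.mem_neighborSet, cycleOn_adj hm hf, Set.mem_insert_iff,
    Set.mem_singleton_iff]
  constructor
  · rintro ⟨j, ⟨h1, h2⟩ | ⟨h1, h2⟩⟩
    · have hji : j = i := hf h1
      subst hji; exact Or.inl h2.symm
    · have hji : j + 1 = i := hf h2
      right
      rw [← h1]; congr 1; rw [← hji]; ring
  · rintro (rfl | rfl)
    · exact ⟨i, Or.inl ⟨rfl, rfl⟩⟩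
    · exact ⟨i - 1, Or.inr ⟨rfl, by rw [sub_add_cancel]⟩⟩

lemma cycleOn_degree (hm : 3 ≤ m) (hodd : m % 2 = 1) (hf : Function.Injective f)
    (i : ZMod m) : ((cycleOn m f).neighborSet (f i)).ncard = 2 := by
  rw [cycleOn_neighborSet hm hf]
  rw [Set.ncard_pair]
  intro h
  have h2 : i + 1 = i - 1 := hf h
  have : (2 : ZMod m) = 0 := by linear_combination h2
  exact zmod_two_ne_zero hm this

lemma cycleOn_connected (hm : 3 ≤ m) (hf : Function.Bijective f) :
    (cycleOn m f).Connected := by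
  have : NeZero m := ⟨by omega⟩
  have key : ∀ k : ℕ, (cycleOn m f).Reachable (f 0) (f ((k : ℕ) : ZMod m)) := by
    intro k
    induction k with
    | zero => simpa using SimpleGraph.Reachable.refl (f 0)
    | succ k ih =>
      refine ih.trans (SimpleGraph.Adj.reachable ?_)
      rw [cycleOn_adj hm hf.1]
      exact ⟨((k:ℕ) : ZMod m), Or.inl ⟨rfl, by push_cast; ring_nf⟩⟩
  haveI : Nonempty W := ⟨f 0⟩
  refine ⟨fun u v => ?_⟩
  obtain ⟨i, rfl⟩ := hf.2 u
  obtain ⟨j, rfl⟩ := hf.2 v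
  have hi := key i.val
  have hj := key j.val
  rw [ZMod.natCast_rightInverse i] at hi
  rw [ZMod.natCast_rightInverse j] at hj
  exact hi.symm.trans hj

lemma cycleOn_isHamCycle {W : Type*} [Fintype W] {m : ℕ} {f : ZMod m → W}
    (hm : 3 ≤ m) (hodd : m % 2 = 1) (hf : Function.Bijective f) :
    IsHamCycle (cycleOn m f) := by
  refine ⟨cycleOn_connected hm hf, fun v => ?_⟩
  obtain ⟨i, rfl⟩ := hf.2 v
  exact cycleOn_degree hm hodd hf.1 i

end gen


open Finset in
lemma hcs_index_injective {V : Type*} [Fintype V] [DecidableEq V] {n : ℕ} (hn : 1 ≤ n)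
    (hcard : Fintype.card V = 2*n+1) (f : Fin n → SimpleGraph V)
    (h : IsHCS (Set.range f)) : Function.Injective f := by
  classical
  -- each cycle has 2n+1 edges
  have hedge : ∀ i : Fin n, (f i).edgeFinset.card = 2*n+1 := by
    intro i
    have hdeg : ∀ v, (f i).degree v = 2 := by
      intro v
      have := (h.1 (f i) ⟨i, rfl⟩).2 v
      rw [show ((f i).neighborSet v).ncard = (f i).degree v from by
          rw [Set.ncard_eq_toFinset_card', Set.toFinset_card,
            SimpleGraph.card_neighborSet_eq_degree]] at this
      exact this
    have hsum := SimpleGraph.sum_degrees_eq_twice_card_edges (f i)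
    simp only [hdeg, Finset.sum_const, Finset.card_univ, smul_eq_mul, hcard] at hsum
    omega
  intro i j hij
  by_contra hne
  -- the image finset is too small
  set S : Finset (SimpleGraph V) := Finset.univ.image f with hS
  have hSsub : S ⊆ (Finset.univ.erase j).image f := by
    intro G hG
    simp only [hS, Finset.mem_image] at hG
    obtain ⟨k, -, rfl⟩ := hG
    by_cases hkj : k = j
    · subst hkj
      exact Finset.mem_image.mpr ⟨i, Finset.mem_erase.mpr ⟨hne, Finset.mem_univ _⟩, hij⟩
    · exact Finset.mem_image.mpr ⟨k, Finset.mem_erase.mpr ⟨hkj, Finset.mem_univ _⟩, rfl⟩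
  have hScard : S.card ≤ n - 1 := by
    calc S.card ≤ ((Finset.univ.erase j).image f).card := Finset.card_le_card hSsub
    _ ≤ (Finset.univ.erase j).card := Finset.card_image_le
    _ = n - 1 := by rw [Finset.card_erase_of_mem (Finset.mem_univ _)]; simp
  -- the cycles cover all edges of ⊤
  have hcover : (⊤ : SimpleGraph V).edgeFinset ⊆ S.biUnion (fun G => G.edgeFinset) := by
    intro e he
    rw [SimpleGraph.mem_edgeFinset] at he
    obtain ⟨G, ⟨⟨k, rfl⟩, hGe⟩, -⟩ := h.2 e he
    exact Finset.mem_biUnion.mpr ⟨f k, Finset.mem_image.mpr ⟨k, Finset.mem_univ _, rfl⟩,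
      SimpleGraph.mem_edgeFinset.mpr hGe⟩
  have htop : (⊤ : SimpleGraph V).edgeFinset.card = n * (2*n+1) := by
    rw [SimpleGraph.card_edgeFinset_top_eq_card_choose_two, hcard, Nat.choose_two_right]
    have : (2*n+1) * (2*n+1-1) = (n * (2*n+1)) * 2 := by
      have h1 : 2*n+1-1 = 2*n := by omega
      rw [h1]; ring
    rw [this, Nat.mul_div_cancel _ (by omega)]
  have hle : (⊤ : SimpleGraph V).edgeFinset.card ≤ S.card * (2*n+1) := by
    calc (⊤ : SimpleGraph V).edgeFinset.card ≤ (S.biUnion (fun G => G.edgeFinset)).card :=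
        Finset.card_le_card hcover
    _ ≤ ∑ G ∈ S, G.edgeFinset.card := Finset.card_biUnion_le
    _ ≤ ∑ G ∈ S, (2*n+1) := by
        refine Finset.sum_le_sum fun G hG => ?_
        obtain ⟨k, -, rfl⟩ := Finset.mem_image.mp hG
        exact (hedge k).le
    _ = S.card * (2*n+1) := by rw [Finset.sum_const, smul_eq_mul]
  rw [htop] at hle
  have : S.card * (2*n+1) ≤ (n-1) * (2*n+1) := Nat.mul_le_mul_right _ hScard
  have h2 : n * (2*n+1) ≤ (n-1) * (2*n+1) := le_trans hle this
  have : (n-1) * (2*n+1) < n * (2*n+1) := by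
    exact (Nat.mul_lt_mul_right (by omega)).mpr (by omega)
  omega

namespace DoublingAux

lemma cast_inj_of_lt {m a b : ℕ} (ha : a < m) (hb : b < m)
    (h : ((a:ℕ) : ZMod m) = ((b:ℕ) : ZMod m)) : a = b := by
  have := congrArg ZMod.val h
  rwa [ZMod.val_cast_of_lt ha, ZMod.val_cast_of_lt hb] at this

lemma val_inj {m : ℕ} [NeZero m] {k k' : ZMod m} (h : k.val = k'.val) : k = k' := by
  rw [← ZMod.natCast_rightInverse k, ← ZMod.natCast_rightInverse k', h]

lemma map_eq_some_pair {n : ℕ} {o : Option (Fin (2*n))} {x : Fin (2*n)} {s b : Bool} :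
    o.map (fun z => (z, b)) = some (x, s) ↔ o = some x ∧ b = s := by
  cases o <;> simp [Prod.ext_iff] <;> aesop

section g
variable {n : ℕ} {g : ZMod (2*n+1) → Option (Fin (2*n))}

lemma g_some (hg : Function.Bijective g) (hg0 : g 0 = none) {j : ZMod (2*n+1)}
    (hj : j ≠ 0) : ∃ x, g j = some x := by
  cases h : g j with
  | none => exact absurd (hg.1 (h.trans hg0.symm)) hj
  | some x => exact ⟨x, rfl⟩

lemma g_nat_some (hg : Function.Bijective g) (hg0 : g 0 = none) {j : ℕ}
    (h1 : 1 ≤ j) (h2 : j ≤ 2*n) : ∃ x, g ((j:ℕ) : ZMod (2*n+1)) = some x := by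
  refine g_some hg hg0 ?_
  intro h
  have : ((j:ℕ) : ZMod (2*n+1)).val = (0 : ZMod (2*n+1)).val := by rw [h]
  rw [ZMod.val_cast_of_lt (by omega), ZMod.val_zero] at this
  omega

end g


section cyc
variable {n : ℕ} {g : ZMod (2*n+1) → Option (Fin (2*n))}

lemma two_n_cast (n : ℕ) : ((2*n : ℕ) : ZMod (2*n+1)) = -1 := by
  have h := ZMod.natCast_self (2*n+1)
  push_cast at h ⊢
  linear_combination h

lemma cyc_none_iff (hn : 1 ≤ n) (hg : Function.Bijective g) (hg0 : g 0 = none)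
    {x : Fin (2*n)} :
    (cycleOn (2*n+1) g).Adj none (some x) ↔
      g ((1:ℕ) : ZMod (2*n+1)) = some x ∨ g ((2*n:ℕ) : ZMod (2*n+1)) = some x := by
  rw [cycleOn_adj (by omega) hg.1]
  constructor
  · rintro ⟨i, ⟨h1, h2⟩ | ⟨h1, h2⟩⟩
    · have : i = 0 := hg.1 (h1.trans hg0.symm)
      subst this
      left
      rw [zero_add] at h2
      simpa using h2
    · have : i + 1 = 0 := hg.1 (h2.trans hg0.symm)
      have hi : i = -1 := by linear_combination this
      subst hi
      right
      rwa [two_n_cast]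
  · rintro (h | h)
    · exact ⟨0, Or.inl ⟨hg0, by simpa using h⟩⟩
    · refine ⟨-1, Or.inr ⟨by rwa [two_n_cast] at h, by rw [neg_add_cancel]; exact hg0⟩⟩

lemma cyc_some_iff (hn : 1 ≤ n) (hg : Function.Bijective g) (hg0 : g 0 = none)
    {x y : Fin (2*n)} :
    (cycleOn (2*n+1) g).Adj (some x) (some y) ↔
      ∃ j : ℕ, 1 ≤ j ∧ j ≤ 2*n-1 ∧
        ((g ((j:ℕ) : ZMod (2*n+1)) = some x ∧ g ((j+1:ℕ) : ZMod (2*n+1)) = some y) ∨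
         (g ((j:ℕ) : ZMod (2*n+1)) = some y ∧ g ((j+1:ℕ) : ZMod (2*n+1)) = some x)) := by
  haveI : NeZero (2*n+1) := ⟨by omega⟩
  rw [cycleOn_adj (by omega) hg.1]
  constructor
  · rintro ⟨i, hi⟩
    have hi0 : i ≠ 0 := by
      rintro rfl
      rcases hi with ⟨h1, -⟩ | ⟨h1, -⟩ <;> rw [hg0] at h1 <;> exact absurd h1 (by simp)
    have hi1 : i + 1 ≠ 0 := by
      intro h
      rcases hi with ⟨-, h2⟩ | ⟨-, h2⟩ <;> rw [h, hg0] at h2 <;> exact absurd h2 (by simp)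
    set r := i.val with hr
    have hrlt : r < 2*n+1 := ZMod.val_lt i
    have hieq : i = ((r:ℕ) : ZMod (2*n+1)) := (ZMod.natCast_rightInverse i).symm
    have hr0 : r ≠ 0 := by
      intro h
      apply hi0
      rw [hieq, h, Nat.cast_zero]
    have hr2n : r ≠ 2*n := by
      intro h
      apply hi1
      rw [hieq, h]
      have : ((2*n:ℕ) : ZMod (2*n+1)) + 1 = (((2*n+1 : ℕ)) : ZMod (2*n+1)) := by push_cast; ring
      rw [this, ZMod.natCast_self]
    have hi1eq : i + 1 = ((r+1 : ℕ) : ZMod (2*n+1)) := by rw [hieq]; push_cast; ring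
    refine ⟨r, by omega, by omega, ?_⟩
    rw [hieq] at hi
    have hcast : ((r:ℕ) : ZMod (2*n+1)) + 1 = ((r+1 : ℕ) : ZMod (2*n+1)) := by push_cast; ring
    rw [hcast] at hi
    exact hi
  · rintro ⟨j, hj1, hj2, hj⟩
    refine ⟨((j:ℕ) : ZMod (2*n+1)), ?_⟩
    have : ((j:ℕ) : ZMod (2*n+1)) + 1 = ((j+1 : ℕ) : ZMod (2*n+1)) := by push_cast; ring
    rw [this]
    exact hj

end cyc

section db
variable {n : ℕ} {A B C : ZMod (2*n+1) → Option (Fin (2*n))}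

lemma doubleT1_at (A B : ZMod (2*n+1) → Option (Fin (2*n))) {r : ℕ} (hr : r < 4*n+1) :
    doubleT1 n A B ((r:ℕ) : ZMod (4*n+1)) =
      if r = 0 then none
      else if r ≤ 2*n then (A ((r:ℕ) : ZMod (2*n+1))).map (fun x => (x, true))
      else (B (((4*n+1-r:ℕ)) : ZMod (2*n+1))).map (fun x => (x, false)) := by
  have h : (((r:ℕ)) : ZMod (4*n+1)).val = r := ZMod.val_cast_of_lt hr
  simp only [doubleT1, h]

lemma doubleT2_at (C : ZMod (2*n+1) → Option (Fin (2*n))) {r : ℕ} (hr : r < 4*n+1) :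
    doubleT2 n C ((r:ℕ) : ZMod (4*n+1)) =
      if r = 0 then none
      else if r ≤ 2*n then (C (((2*n+1-r:ℕ)) : ZMod (2*n+1))).map (fun x => (x, decide (r % 2 = 1)))
      else (C (((r-2*n:ℕ)) : ZMod (2*n+1))).map (fun x => (x, decide ((r - 2*n) % 2 = 1))) := by
  have h : (((r:ℕ)) : ZMod (4*n+1)).val = r := ZMod.val_cast_of_lt hr
  simp only [doubleT2, h]

lemma doubleT1_cases (hA : Function.Bijective A) (hB : Function.Bijective B)
    (hA0 : A 0 = none) (hB0 : B 0 = none) (k : ZMod (4*n+1)) :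
    (k.val = 0 ∧ doubleT1 n A B k = none) ∨
    (1 ≤ k.val ∧ k.val ≤ 2*n ∧ ∃ x, A ((k.val : ℕ) : ZMod (2*n+1)) = some x ∧
      doubleT1 n A B k = some (x, true)) ∨
    (2*n+1 ≤ k.val ∧ k.val ≤ 4*n ∧ ∃ x, B ((4*n+1-k.val : ℕ) : ZMod (2*n+1)) = some x ∧
      doubleT1 n A B k = some (x, false)) := by
  haveI : NeZero (4*n+1) := ⟨by omega⟩
  have hrlt : k.val < 4*n+1 := ZMod.val_lt k
  have hkeq : k = ((k.val : ℕ) : ZMod (4*n+1)) := (ZMod.natCast_rightInverse k).symm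
  rcases Nat.eq_zero_or_pos k.val with h0 | h0
  · left
    refine ⟨h0, ?_⟩
    simp [doubleT1, h0]
  rcases le_or_gt k.val (2*n) with h1 | h1
  · right; left
    obtain ⟨x, hx⟩ := g_nat_some hA hA0 h0 h1
    refine ⟨h0, h1, x, hx, ?_⟩
    simp only [doubleT1, if_neg (by omega : ¬ k.val = 0), if_pos h1, hx, Option.map_some]
  · right; right
    obtain ⟨x, hx⟩ := g_nat_some hB hB0 (j := 4*n+1-k.val) (by omega) (by omega)
    refine ⟨by omega, by omega, x, hx, ?_⟩
    simp only [doubleT1, if_neg (by omega : ¬ k.val = 0), if_neg (by omega : ¬ k.val ≤ 2*n),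
      hx, Option.map_some]

lemma doubleT2_cases (hC : Function.Bijective C) (hC0 : C 0 = none) (k : ZMod (4*n+1)) :
    (k.val = 0 ∧ doubleT2 n C k = none) ∨
    (1 ≤ k.val ∧ k.val ≤ 2*n ∧ ∃ x, C ((2*n+1-k.val : ℕ) : ZMod (2*n+1)) = some x ∧
      doubleT2 n C k = some (x, decide (k.val % 2 = 1))) ∨
    (2*n+1 ≤ k.val ∧ k.val ≤ 4*n ∧ ∃ x, C ((k.val-2*n : ℕ) : ZMod (2*n+1)) = some x ∧
      doubleT2 n C k = some (x, decide ((k.val-2*n) % 2 = 1))) := by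
  haveI : NeZero (4*n+1) := ⟨by omega⟩
  have hrlt : k.val < 4*n+1 := ZMod.val_lt k
  rcases Nat.eq_zero_or_pos k.val with h0 | h0
  · left
    refine ⟨h0, ?_⟩
    simp [doubleT2, h0]
  rcases le_or_gt k.val (2*n) with h1 | h1
  · right; left
    obtain ⟨x, hx⟩ := g_nat_some hC hC0 (j := 2*n+1-k.val) (by omega) (by omega)
    refine ⟨h0, h1, x, hx, ?_⟩
    simp only [doubleT2, if_neg (by omega : ¬ k.val = 0), if_pos h1, hx, Option.map_some]
  · right; right
    obtain ⟨x, hx⟩ := g_nat_some hC hC0 (j := k.val - 2*n) (by omega) (by omega)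
    refine ⟨by omega, by omega, x, hx, ?_⟩
    simp only [doubleT2, if_neg (by omega : ¬ k.val = 0), if_neg (by omega : ¬ k.val ≤ 2*n),
      hx, Option.map_some]

lemma doubleT1_bijective (hn : 1 ≤ n) (hA : Function.Bijective A) (hB : Function.Bijective B)
    (hA0 : A 0 = none) (hB0 : B 0 = none) : Function.Bijective (doubleT1 n A B) := by
  haveI : NeZero (4*n+1) := ⟨by omega⟩
  rw [Fintype.bijective_iff_injective_and_card]
  refine ⟨?_, by simp [ZMod.card]; omega⟩
  intro k k' h
  rcases doubleT1_cases hA hB hA0 hB0 k with ⟨hv, he⟩ | ⟨hv1, hv2, x, hx, he⟩ | ⟨hv1, hv2, x, hx, he⟩ <;>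
    rcases doubleT1_cases hA hB hA0 hB0 k' with ⟨hv', he'⟩ | ⟨hv1', hv2', x', hx', he'⟩ | ⟨hv1', hv2', x', hx', he'⟩ <;>
    rw [he, he'] at h
  · exact val_inj (hv.trans hv'.symm)
  · exact absurd h (by simp)
  · exact absurd h (by simp)
  · exact absurd h (by simp)
  · obtain rfl : x = x' := by simpa using h
    have := cast_inj_of_lt (m := 2*n+1) (by omega) (by omega) (hA.1 (hx.trans hx'.symm))
    exact val_inj this
  · exact absurd h (by simp)
  · exact absurd h (by simp)
  · exact absurd h (by simp)
  · obtain rfl : x = x' := by simpa using h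
    have := cast_inj_of_lt (m := 2*n+1) (by omega) (by omega) (hB.1 (hx.trans hx'.symm))
    exact val_inj (by omega)

lemma doubleT2_bijective (hn : 1 ≤ n) (hC : Function.Bijective C)
    (hC0 : C 0 = none) : Function.Bijective (doubleT2 n C) := by
  haveI : NeZero (4*n+1) := ⟨by omega⟩
  rw [Fintype.bijective_iff_injective_and_card]
  refine ⟨?_, by simp [ZMod.card]; omega⟩
  intro k k' h
  rcases doubleT2_cases hC hC0 k with ⟨hv, he⟩ | ⟨hv1, hv2, x, hx, he⟩ | ⟨hv1, hv2, x, hx, he⟩ <;>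
    rcases doubleT2_cases hC hC0 k' with ⟨hv', he'⟩ | ⟨hv1', hv2', x', hx', he'⟩ | ⟨hv1', hv2', x', hx', he'⟩ <;>
    rw [he, he'] at h
  · exact val_inj (hv.trans hv'.symm)
  · exact absurd h (by simp)
  · exact absurd h (by simp)
  · exact absurd h (by simp)
  · obtain ⟨rfl, hs⟩ : x = x' ∧ decide (k.val % 2 = 1) = decide (k'.val % 2 = 1) := by
      rw [Option.some_inj, Prod.mk.injEq] at h
      exact h
    have := cast_inj_of_lt (m := 2*n+1) (by omega) (by omega) (hC.1 (hx.trans hx'.symm))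
    exact val_inj (by omega)
  · obtain ⟨rfl, hs⟩ : x = x' ∧ decide (k.val % 2 = 1) = decide ((k'.val - 2*n) % 2 = 1) := by
      rw [Option.some_inj, Prod.mk.injEq] at h
      exact h
    have h1 := cast_inj_of_lt (m := 2*n+1) (by omega) (by omega) (hC.1 (hx.trans hx'.symm))
    have h2 := decide_eq_decide.mp hs
    exact absurd h1 (by omega)
  · exact absurd h (by simp)
  · obtain ⟨rfl, hs⟩ : x = x' ∧ decide ((k.val - 2*n) % 2 = 1) = decide (k'.val % 2 = 1) := by
      rw [Option.some_inj, Prod.mk.injEq] at h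
      exact h
    have h1 := cast_inj_of_lt (m := 2*n+1) (by omega) (by omega) (hC.1 (hx.trans hx'.symm))
    have h2 := decide_eq_decide.mp hs
    exact absurd h1 (by omega)
  · obtain ⟨rfl, hs⟩ : x = x' ∧ decide ((k.val - 2*n) % 2 = 1) = decide ((k'.val - 2*n) % 2 = 1) := by
      rw [Option.some_inj, Prod.mk.injEq] at h
      exact h
    have := cast_inj_of_lt (m := 2*n+1) (by omega) (by omega) (hC.1 (hx.trans hx'.symm))
    exact val_inj (by omega)

end db

section pat
variable {n : ℕ} {A B C : ZMod (2*n+1) → Option (Fin (2*n))}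

def E1 (n : ℕ) (A B : ZMod (2*n+1) → Option (Fin (2*n)))
    (w w' : Option (Fin (2*n) × Bool)) : Prop :=
  (w = none ∧ w' = (A ((1:ℕ) : ZMod (2*n+1))).map (fun x => (x, true))) ∨
  (∃ j : ℕ, 1 ≤ j ∧ j ≤ 2*n-1 ∧ w = (A ((j:ℕ) : ZMod (2*n+1))).map (fun x => (x, true)) ∧
    w' = (A ((j+1:ℕ) : ZMod (2*n+1))).map (fun x => (x, true))) ∨
  (w = (A ((2*n:ℕ) : ZMod (2*n+1))).map (fun x => (x, true)) ∧
    w' = (B ((2*n:ℕ) : ZMod (2*n+1))).map (fun x => (x, false))) ∨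
  (∃ j : ℕ, 1 ≤ j ∧ j ≤ 2*n-1 ∧ w = (B ((j+1:ℕ) : ZMod (2*n+1))).map (fun x => (x, false)) ∧
    w' = (B ((j:ℕ) : ZMod (2*n+1))).map (fun x => (x, false))) ∨
  (w = (B ((1:ℕ) : ZMod (2*n+1))).map (fun x => (x, false)) ∧ w' = none)

def E2 (n : ℕ) (C : ZMod (2*n+1) → Option (Fin (2*n)))
    (w w' : Option (Fin (2*n) × Bool)) : Prop :=
  (w = none ∧ w' = (C ((2*n:ℕ) : ZMod (2*n+1))).map (fun x => (x, true))) ∨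
  (∃ j : ℕ, 1 ≤ j ∧ j ≤ 2*n-1 ∧
     w = (C ((j+1:ℕ) : ZMod (2*n+1))).map (fun x => (x, decide ((2*n-j) % 2 = 1))) ∧
     w' = (C ((j:ℕ) : ZMod (2*n+1))).map (fun x => (x, decide ((2*n-j+1) % 2 = 1)))) ∨
  (w = (C ((1:ℕ) : ZMod (2*n+1))).map (fun x => (x, false)) ∧
   w' = (C ((1:ℕ) : ZMod (2*n+1))).map (fun x => (x, true))) ∨
  (∃ j : ℕ, 1 ≤ j ∧ j ≤ 2*n-1 ∧
     w = (C ((j:ℕ) : ZMod (2*n+1))).map (fun x => (x, decide (j % 2 = 1))) ∧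
     w' = (C ((j+1:ℕ) : ZMod (2*n+1))).map (fun x => (x, decide ((j+1) % 2 = 1)))) ∨
  (w = (C ((2*n:ℕ) : ZMod (2*n+1))).map (fun x => (x, false)) ∧ w' = none)

lemma E1_consec (hn : 1 ≤ n) (k : ZMod (4*n+1)) :
    E1 n A B (doubleT1 n A B k) (doubleT1 n A B (k + 1)) := by
  haveI : NeZero (4*n+1) := ⟨by omega⟩
  obtain ⟨r, hr, hkeq⟩ : ∃ r : ℕ, r < 4*n+1 ∧ k = ((r:ℕ) : ZMod (4*n+1)) :=
    ⟨k.val, ZMod.val_lt k, (ZMod.natCast_rightInverse k).symm⟩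
  have hk1 : ((r:ℕ) : ZMod (4*n+1)) + 1 = ((r+1 : ℕ) : ZMod (4*n+1)) := by push_cast; ring
  rw [hkeq, hk1]
  rcases (by omega : r = 0 ∨ (1 ≤ r ∧ r ≤ 2*n-1) ∨ r = 2*n ∨ (2*n+1 ≤ r ∧ r ≤ 4*n-1) ∨ r = 4*n)
    with rfl | ⟨h1, h2⟩ | rfl | ⟨h1, h2⟩ | rfl
  · rw [doubleT1_at _ _ (by omega), doubleT1_at _ _ (by omega)]
    rw [if_pos rfl, if_neg (by omega), if_pos (by omega)]
    left
    norm_num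
  · rw [doubleT1_at _ _ (by omega), doubleT1_at _ _ (by omega)]
    rw [if_neg (by omega), if_pos (by omega), if_neg (by omega), if_pos (by omega)]
    right; left
    exact ⟨r, h1, h2, rfl, rfl⟩
  · rw [doubleT1_at _ _ (by omega), doubleT1_at _ _ (by omega)]
    rw [if_neg (by omega), if_pos (by omega), if_neg (by omega), if_neg (by omega)]
    right; right; left
    have h3 : 4*n+1-(2*n+1) = 2*n := by omega
    rw [h3]
    exact ⟨rfl, rfl⟩
  · rw [doubleT1_at _ _ (by omega), doubleT1_at _ _ (by omega)]
    rw [if_neg (by omega), if_neg (by omega), if_neg (by omega), if_neg (by omega)]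
    right; right; right; left
    refine ⟨4*n-r, by omega, by omega, ?_, ?_⟩
    · have h3 : 4*n+1-r = (4*n-r)+1 := by omega
      rw [h3]
    · have h3 : 4*n+1-(r+1) = 4*n-r := by omega
      rw [h3]
  · rw [doubleT1_at _ _ (by omega)]
    rw [if_neg (by omega), if_neg (by omega)]
    right; right; right; right
    constructor
    · have h3 : 4*n+1-4*n = 1 := by omega
      rw [h3]
    · have h4 : ((4*n+1 : ℕ) : ZMod (4*n+1)) = 0 := ZMod.natCast_self _
      rw [h4]
      simp [doubleT1]

lemma E1_to_pair (hn : 1 ≤ n) {w w' : Option (Fin (2*n) × Bool)} (h : E1 n A B w w') :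
    ∃ k, doubleT1 n A B k = w ∧ doubleT1 n A B (k + 1) = w' := by
  haveI : NeZero (4*n+1) := ⟨by omega⟩
  have cast1 : ∀ r : ℕ, ((r:ℕ) : ZMod (4*n+1)) + 1 = ((r+1 : ℕ) : ZMod (4*n+1)) := by
    intro r; push_cast; ring
  rcases h with ⟨hw, hw'⟩ | ⟨j, h1, h2, hw, hw'⟩ | ⟨hw, hw'⟩ | ⟨j, h1, h2, hw, hw'⟩ | ⟨hw, hw'⟩
  · refine ⟨((0:ℕ) : ZMod (4*n+1)), ?_, ?_⟩
    · rw [doubleT1_at _ _ (by omega), if_pos rfl, hw]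
    · rw [cast1, doubleT1_at _ _ (by omega), if_neg (by omega), if_pos (by omega), hw']
  · refine ⟨((j:ℕ) : ZMod (4*n+1)), ?_, ?_⟩
    · rw [doubleT1_at _ _ (by omega), if_neg (by omega), if_pos (by omega), hw]
    · rw [cast1, doubleT1_at _ _ (by omega), if_neg (by omega), if_pos (by omega), hw']
  · refine ⟨((2*n:ℕ) : ZMod (4*n+1)), ?_, ?_⟩
    · rw [doubleT1_at _ _ (by omega), if_neg (by omega), if_pos (by omega), hw]
    · rw [cast1, doubleT1_at _ _ (by omega), if_neg (by omega), if_neg (by omega), hw']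
      have h3 : 4*n+1-(2*n+1) = 2*n := by omega
      rw [h3]
  · refine ⟨((4*n-j:ℕ) : ZMod (4*n+1)), ?_, ?_⟩
    · rw [doubleT1_at _ _ (by omega), if_neg (by omega), if_neg (by omega), hw]
      have h3 : 4*n+1-(4*n-j) = j+1 := by omega
      rw [h3]
    · rw [cast1, doubleT1_at _ _ (by omega), if_neg (by omega), if_neg (by omega), hw']
      have h3 : 4*n+1-(4*n-j+1) = j := by omega
      rw [h3]
  · refine ⟨((4*n:ℕ) : ZMod (4*n+1)), ?_, ?_⟩
    · rw [doubleT1_at _ _ (by omega), if_neg (by omega), if_neg (by omega), hw]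
      have h3 : 4*n+1-4*n = 1 := by omega
      rw [h3]
    · rw [cast1, hw']
      have h4 : ((4*n+1 : ℕ) : ZMod (4*n+1)) = 0 := ZMod.natCast_self _
      rw [h4]
      simp [doubleT1]

lemma T1_adj_iff (hn : 1 ≤ n) (hA : Function.Bijective A) (hB : Function.Bijective B)
    (hA0 : A 0 = none) (hB0 : B 0 = none) {w w' : Option (Fin (2*n) × Bool)} :
    (cycleOn (4*n+1) (doubleT1 n A B)).Adj w w' ↔ E1 n A B w w' ∨ E1 n A B w' w := by
  rw [cycleOn_adj (by omega) (doubleT1_bijective hn hA hB hA0 hB0).1]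
  constructor
  · rintro ⟨k, ⟨h1, h2⟩ | ⟨h1, h2⟩⟩
    · left; rw [← h1, ← h2]; exact E1_consec hn k
    · right; rw [← h1, ← h2]; exact E1_consec hn k
  · rintro (h | h)
    · obtain ⟨k, h1, h2⟩ := E1_to_pair hn h
      exact ⟨k, Or.inl ⟨h1, h2⟩⟩
    · obtain ⟨k, h1, h2⟩ := E1_to_pair hn h
      exact ⟨k, Or.inr ⟨h1, h2⟩⟩

lemma E2_consec (hn : 1 ≤ n) (k : ZMod (4*n+1)) :
    E2 n C (doubleT2 n C k) (doubleT2 n C (k + 1)) := by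
  haveI : NeZero (4*n+1) := ⟨by omega⟩
  obtain ⟨r, hr, hkeq⟩ : ∃ r : ℕ, r < 4*n+1 ∧ k = ((r:ℕ) : ZMod (4*n+1)) :=
    ⟨k.val, ZMod.val_lt k, (ZMod.natCast_rightInverse k).symm⟩
  have hk1 : ((r:ℕ) : ZMod (4*n+1)) + 1 = ((r+1 : ℕ) : ZMod (4*n+1)) := by push_cast; ring
  rw [hkeq, hk1]
  rcases (by omega : r = 0 ∨ (1 ≤ r ∧ r ≤ 2*n-1) ∨ r = 2*n ∨ (2*n+1 ≤ r ∧ r ≤ 4*n-1) ∨ r = 4*n)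
    with rfl | ⟨h1, h2⟩ | rfl | ⟨h1, h2⟩ | rfl
  · rw [doubleT2_at _ (by omega), doubleT2_at _ (by omega)]
    rw [if_pos rfl, if_neg (by omega), if_pos (by omega)]
    left
    have h3 : 2*n+1-(0+1) = 2*n := by omega
    rw [h3]
    norm_num
  · rw [doubleT2_at _ (by omega), doubleT2_at _ (by omega)]
    rw [if_neg (by omega), if_pos (by omega), if_neg (by omega), if_pos (by omega)]
    right; left
    refine ⟨2*n-r, by omega, by omega, ?_, ?_⟩
    · have h3 : 2*n+1-r = (2*n-r)+1 := by omega
      have h4 : 2*n-(2*n-r) = r := by omega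
      rw [h3, h4]
    · have h3 : 2*n+1-(r+1) = 2*n-r := by omega
      have h4 : 2*n-(2*n-r)+1 = r+1 := by omega
      rw [h3, h4]
  · rw [doubleT2_at _ (by omega), doubleT2_at _ (by omega)]
    rw [if_neg (by omega), if_pos (by omega), if_neg (by omega), if_neg (by omega)]
    right; right; left
    have h3 : 2*n+1-2*n = 1 := by omega
    have h4 : 2*n+1-2*n = 1 := by omega
    have h5 : 2*n % 2 = 0 := by omega
    rw [h3]
    constructor
    · rw [h5]
      norm_num
    · norm_num
  · rw [doubleT2_at _ (by omega), doubleT2_at _ (by omega)]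
    rw [if_neg (by omega), if_neg (by omega), if_neg (by omega), if_neg (by omega)]
    right; right; right; left
    refine ⟨r-2*n, by omega, by omega, rfl, ?_⟩
    have h3 : r+1-2*n = (r-2*n)+1 := by omega
    rw [h3]
  · rw [doubleT2_at _ (by omega)]
    rw [if_neg (by omega), if_neg (by omega)]
    right; right; right; right
    constructor
    · have h3 : 4*n-2*n = 2*n := by omega
      have h5 : (4*n-2*n) % 2 = 0 := by omega
      rw [h5, h3]
      norm_num
    · have h4 : ((4*n+1 : ℕ) : ZMod (4*n+1)) = 0 := ZMod.natCast_self _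
      rw [h4]
      simp [doubleT2]

lemma E2_to_pair (hn : 1 ≤ n) {w w' : Option (Fin (2*n) × Bool)} (h : E2 n C w w') :
    ∃ k, doubleT2 n C k = w ∧ doubleT2 n C (k + 1) = w' := by
  haveI : NeZero (4*n+1) := ⟨by omega⟩
  have cast1 : ∀ r : ℕ, ((r:ℕ) : ZMod (4*n+1)) + 1 = ((r+1 : ℕ) : ZMod (4*n+1)) := by
    intro r; push_cast; ring
  rcases h with ⟨hw, hw'⟩ | ⟨j, h1, h2, hw, hw'⟩ | ⟨hw, hw'⟩ | ⟨j, h1, h2, hw, hw'⟩ | ⟨hw, hw'⟩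
  · refine ⟨((0:ℕ) : ZMod (4*n+1)), ?_, ?_⟩
    · rw [doubleT2_at _ (by omega), if_pos rfl, hw]
    · rw [cast1, doubleT2_at _ (by omega), if_neg (by omega), if_pos (by omega), hw']
      have h3 : 2*n+1-(0+1) = 2*n := by omega
      rw [h3]
      norm_num
  · refine ⟨((2*n-j:ℕ) : ZMod (4*n+1)), ?_, ?_⟩
    · rw [doubleT2_at _ (by omega), if_neg (by omega), if_pos (by omega), hw]
      have h3 : 2*n+1-(2*n-j) = j+1 := by omega
      have h4 : (2*n-j) % 2 = (2*n-j) % 2 := rfl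
      rw [h3]
    · rw [cast1, doubleT2_at _ (by omega), if_neg (by omega), if_pos (by omega), hw']
      have h3 : 2*n+1-(2*n-j+1) = j := by omega
      have h4 : (2*n-j+1) % 2 = (2*n-j+1) % 2 := rfl
      rw [h3]
  · refine ⟨((2*n:ℕ) : ZMod (4*n+1)), ?_, ?_⟩
    · rw [doubleT2_at _ (by omega), if_neg (by omega), if_pos (by omega), hw]
      have h3 : 2*n+1-2*n = 1 := by omega
      have h5 : 2*n % 2 = 0 := by omega
      rw [h3, h5]
      norm_num
    · rw [cast1, doubleT2_at _ (by omega), if_neg (by omega), if_neg (by omega), hw']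
      have h3 : 2*n+1-2*n = 1 := by omega
      rw [h3]
      norm_num
  · refine ⟨((2*n+j:ℕ) : ZMod (4*n+1)), ?_, ?_⟩
    · rw [doubleT2_at _ (by omega), if_neg (by omega), if_neg (by omega), hw]
      have h3 : 2*n+j-2*n = j := by omega
      rw [h3]
    · rw [cast1, doubleT2_at _ (by omega), if_neg (by omega), if_neg (by omega), hw']
      have h3 : 2*n+j+1-2*n = j+1 := by omega
      rw [h3]
  · refine ⟨((4*n:ℕ) : ZMod (4*n+1)), ?_, ?_⟩
    · rw [doubleT2_at _ (by omega), if_neg (by omega), if_neg (by omega), hw]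
      have h3 : 4*n-2*n = 2*n := by omega
      have h5 : (4*n-2*n) % 2 = 0 := by omega
      rw [h5, h3]
      norm_num
    · rw [cast1, hw']
      have h4 : ((4*n+1 : ℕ) : ZMod (4*n+1)) = 0 := ZMod.natCast_self _
      rw [h4]
      simp [doubleT2]

lemma T2_adj_iff (hn : 1 ≤ n) (hC : Function.Bijective C)
    (hC0 : C 0 = none) {w w' : Option (Fin (2*n) × Bool)} :
    (cycleOn (4*n+1) (doubleT2 n C)).Adj w w' ↔ E2 n C w w' ∨ E2 n C w' w := by
  rw [cycleOn_adj (by omega) (doubleT2_bijective hn hC hC0).1]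
  constructor
  · rintro ⟨k, ⟨h1, h2⟩ | ⟨h1, h2⟩⟩
    · left; rw [← h1, ← h2]; exact E2_consec hn k
    · right; rw [← h1, ← h2]; exact E2_consec hn k
  · rintro (h | h)
    · obtain ⟨k, h1, h2⟩ := E2_to_pair hn h
      exact ⟨k, Or.inl ⟨h1, h2⟩⟩
    · obtain ⟨k, h1, h2⟩ := E2_to_pair hn h
      exact ⟨k, Or.inr ⟨h1, h2⟩⟩

end pat

section shape
variable {n : ℕ} {A B C : ZMod (2*n+1) → Option (Fin (2*n))}

/-- `x,y` occur consecutively (away from `∞`) in the cycle of `g`. -/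
def J (n : ℕ) (g : ZMod (2*n+1) → Option (Fin (2*n))) (x y : Fin (2*n)) : Prop :=
  ∃ j : ℕ, 1 ≤ j ∧ j ≤ 2*n-1 ∧
    ((g ((j:ℕ) : ZMod (2*n+1)) = some x ∧ g ((j+1:ℕ) : ZMod (2*n+1)) = some y) ∨
     (g ((j:ℕ) : ZMod (2*n+1)) = some y ∧ g ((j+1:ℕ) : ZMod (2*n+1)) = some x))

lemma J_iff_adj (hn : 1 ≤ n) (hg : Function.Bijective C) (hg0 : C 0 = none)
    {x y : Fin (2*n)} :
    J n C x y ↔ (cycleOn (2*n+1) C).Adj (some x) (some y) := by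
  rw [cyc_some_iff hn hg hg0]
  rfl

lemma T1_none_iff (hn : 1 ≤ n) (hA : Function.Bijective A) (hB : Function.Bijective B)
    (hA0 : A 0 = none) (hB0 : B 0 = none) {x : Fin (2*n)} {s : Bool} :
    (cycleOn (4*n+1) (doubleT1 n A B)).Adj none (some (x, s)) ↔
      (s = true ∧ A ((1:ℕ) : ZMod (2*n+1)) = some x) ∨
      (s = false ∧ B ((1:ℕ) : ZMod (2*n+1)) = some x) := by
  rw [T1_adj_iff hn hA hB hA0 hB0]
  constructor
  · rintro (h | h)
    · rcases h with ⟨-, hw'⟩ | ⟨j, h1, h2, hw, -⟩ | ⟨hw, -⟩ | ⟨j, h1, h2, hw, -⟩ | ⟨-, hw'⟩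
      · obtain ⟨ha, hs⟩ := map_eq_some_pair.mp hw'.symm
        exact Or.inl ⟨hs.symm, ha⟩
      · obtain ⟨a, ha⟩ := g_nat_some hA hA0 h1 (by omega)
        rw [ha] at hw; exact absurd hw (by simp)
      · obtain ⟨a, ha⟩ := g_nat_some hA hA0 (by omega : 1 ≤ 2*n) (by omega)
        rw [ha] at hw; exact absurd hw (by simp)
      · obtain ⟨a, ha⟩ := g_nat_some hB hB0 (by omega : 1 ≤ j+1) (by omega)
        rw [ha] at hw; exact absurd hw (by simp)
      · exact absurd hw' (by simp)
    · rcases h with ⟨hw, -⟩ | ⟨j, h1, h2, -, hw'⟩ | ⟨-, hw'⟩ | ⟨j, h1, h2, -, hw'⟩ | ⟨hw, -⟩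
      · exact absurd hw (by simp)
      · obtain ⟨a, ha⟩ := g_nat_some hA hA0 (by omega : 1 ≤ j+1) (by omega)
        rw [ha] at hw'; exact absurd hw' (by simp)
      · obtain ⟨a, ha⟩ := g_nat_some hB hB0 (by omega : 1 ≤ 2*n) (by omega)
        rw [ha] at hw'; exact absurd hw' (by simp)
      · obtain ⟨a, ha⟩ := g_nat_some hB hB0 h1 (by omega)
        rw [ha] at hw'; exact absurd hw' (by simp)
      · obtain ⟨ha, hs⟩ := map_eq_some_pair.mp hw.symm
        exact Or.inr ⟨hs.symm, ha⟩
  · rintro (⟨rfl, hx⟩ | ⟨rfl, hx⟩)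
    · exact Or.inl (Or.inl ⟨rfl, by rw [hx]; rfl⟩)
    · exact Or.inr (Or.inr (Or.inr (Or.inr (Or.inr ⟨by rw [hx]; rfl, rfl⟩))))

lemma T1_some_iff (hn : 1 ≤ n) (hA : Function.Bijective A) (hB : Function.Bijective B)
    (hA0 : A 0 = none) (hB0 : B 0 = none) {x y : Fin (2*n)} {s t : Bool} :
    (cycleOn (4*n+1) (doubleT1 n A B)).Adj (some (x, s)) (some (y, t)) ↔
      (s = true ∧ t = true ∧ J n A x y) ∨
      (s = false ∧ t = false ∧ J n B x y) ∨
      (s = true ∧ t = false ∧ A ((2*n:ℕ) : ZMod (2*n+1)) = some x ∧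
        B ((2*n:ℕ) : ZMod (2*n+1)) = some y) ∨
      (s = false ∧ t = true ∧ B ((2*n:ℕ) : ZMod (2*n+1)) = some x ∧
        A ((2*n:ℕ) : ZMod (2*n+1)) = some y) := by
  rw [T1_adj_iff hn hA hB hA0 hB0]
  constructor
  · rintro (h | h)
    · rcases h with ⟨hw, -⟩ | ⟨j, h1, h2, hw, hw'⟩ | ⟨hw, hw'⟩ | ⟨j, h1, h2, hw, hw'⟩ | ⟨-, hw'⟩
      · exact absurd hw (by simp)
      · obtain ⟨ha, hs⟩ := map_eq_some_pair.mp hw.symm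
        obtain ⟨ha', ht⟩ := map_eq_some_pair.mp hw'.symm
        exact Or.inl ⟨hs.symm, ht.symm, j, h1, h2, Or.inl ⟨ha, ha'⟩⟩
      · obtain ⟨ha, hs⟩ := map_eq_some_pair.mp hw.symm
        obtain ⟨ha', ht⟩ := map_eq_some_pair.mp hw'.symm
        exact Or.inr (Or.inr (Or.inl ⟨hs.symm, ht.symm, ha, ha'⟩))
      · obtain ⟨ha, hs⟩ := map_eq_some_pair.mp hw.symm
        obtain ⟨ha', ht⟩ := map_eq_some_pair.mp hw'.symm
        exact Or.inr (Or.inl ⟨hs.symm, ht.symm, j, h1, h2, Or.inr ⟨ha', ha⟩⟩)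
      · exact absurd hw' (by simp)
    · rcases h with ⟨hw, -⟩ | ⟨j, h1, h2, hw, hw'⟩ | ⟨hw, hw'⟩ | ⟨j, h1, h2, hw, hw'⟩ | ⟨-, hw'⟩
      · exact absurd hw (by simp)
      · obtain ⟨ha, ht⟩ := map_eq_some_pair.mp hw.symm
        obtain ⟨ha', hs⟩ := map_eq_some_pair.mp hw'.symm
        exact Or.inl ⟨hs.symm, ht.symm, j, h1, h2, Or.inr ⟨ha, ha'⟩⟩
      · obtain ⟨ha, ht⟩ := map_eq_some_pair.mp hw.symm
        obtain ⟨ha', hs⟩ := map_eq_some_pair.mp hw'.symm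
        exact Or.inr (Or.inr (Or.inr ⟨hs.symm, ht.symm, ha', ha⟩))
      · obtain ⟨ha, ht⟩ := map_eq_some_pair.mp hw.symm
        obtain ⟨ha', hs⟩ := map_eq_some_pair.mp hw'.symm
        exact Or.inr (Or.inl ⟨hs.symm, ht.symm, j, h1, h2, Or.inl ⟨ha', ha⟩⟩)
      · exact absurd hw' (by simp)
  · rintro (⟨rfl, rfl, j, h1, h2, hj | hj⟩ | ⟨rfl, rfl, j, h1, h2, hj | hj⟩ |
      ⟨rfl, rfl, hx, hy⟩ | ⟨rfl, rfl, hx, hy⟩)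
    · exact Or.inl (Or.inr (Or.inl ⟨j, h1, h2, by rw [hj.1]; rfl, by rw [hj.2]; rfl⟩))
    · exact Or.inr (Or.inr (Or.inl ⟨j, h1, h2, by rw [hj.1]; rfl, by rw [hj.2]; rfl⟩))
    · exact Or.inr (Or.inr (Or.inr (Or.inr (Or.inl
        ⟨j, h1, h2, by rw [hj.2]; rfl, by rw [hj.1]; rfl⟩))))
    · exact Or.inl (Or.inr (Or.inr (Or.inr (Or.inl
        ⟨j, h1, h2, by rw [hj.2]; rfl, by rw [hj.1]; rfl⟩))))
    · exact Or.inl (Or.inr (Or.inr (Or.inl ⟨by rw [hx]; rfl, by rw [hy]; rfl⟩)))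
    · exact Or.inr (Or.inr (Or.inr (Or.inl ⟨by rw [hy]; rfl, by rw [hx]; rfl⟩)))

lemma T2_none_iff (hn : 1 ≤ n) (hC : Function.Bijective C) (hC0 : C 0 = none)
    {x : Fin (2*n)} {s : Bool} :
    (cycleOn (4*n+1) (doubleT2 n C)).Adj none (some (x, s)) ↔
      C ((2*n:ℕ) : ZMod (2*n+1)) = some x := by
  rw [T2_adj_iff hn hC hC0]
  constructor
  · rintro (h | h)
    · rcases h with ⟨-, hw'⟩ | ⟨j, h1, h2, hw, -⟩ | ⟨hw, -⟩ | ⟨j, h1, h2, hw, -⟩ | ⟨hw, -⟩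
      · exact (map_eq_some_pair.mp hw'.symm).1
      · obtain ⟨a, ha⟩ := g_nat_some hC hC0 (by omega : 1 ≤ j+1) (by omega)
        rw [ha] at hw; exact absurd hw (by simp)
      · obtain ⟨a, ha⟩ := g_nat_some hC hC0 (by omega : 1 ≤ 1) (by omega)
        rw [ha] at hw; exact absurd hw (by simp)
      · obtain ⟨a, ha⟩ := g_nat_some hC hC0 h1 (by omega)
        rw [ha] at hw; exact absurd hw (by simp)
      · obtain ⟨a, ha⟩ := g_nat_some hC hC0 (by omega : 1 ≤ 2*n) (by omega)
        rw [ha] at hw; exact absurd hw (by simp)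
    · rcases h with ⟨hw, -⟩ | ⟨j, h1, h2, -, hw'⟩ | ⟨-, hw'⟩ | ⟨j, h1, h2, -, hw'⟩ | ⟨hw, -⟩
      · exact absurd hw (by simp)
      · obtain ⟨a, ha⟩ := g_nat_some hC hC0 h1 (by omega)
        rw [ha] at hw'; exact absurd hw' (by simp)
      · obtain ⟨a, ha⟩ := g_nat_some hC hC0 (by omega : 1 ≤ 1) (by omega)
        rw [ha] at hw'; exact absurd hw' (by simp)
      · obtain ⟨a, ha⟩ := g_nat_some hC hC0 (by omega : 1 ≤ j+1) (by omega)
        rw [ha] at hw'; exact absurd hw' (by simp)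
      · exact (map_eq_some_pair.mp hw.symm).1
  · intro hx
    cases s
    · exact Or.inr (Or.inr (Or.inr (Or.inr (Or.inr ⟨by rw [hx]; rfl, rfl⟩))))
    · exact Or.inl (Or.inl ⟨rfl, by rw [hx]; rfl⟩)

lemma T2_some_iff (hn : 1 ≤ n) (hC : Function.Bijective C) (hC0 : C 0 = none)
    {x y : Fin (2*n)} {s t : Bool} :
    (cycleOn (4*n+1) (doubleT2 n C)).Adj (some (x, s)) (some (y, t)) ↔
      s ≠ t ∧ ((x = y ∧ C ((1:ℕ) : ZMod (2*n+1)) = some x) ∨ J n C x y) := by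
  rw [T2_adj_iff hn hC hC0]
  constructor
  · rintro (h | h)
    · rcases h with ⟨hw, -⟩ | ⟨j, h1, h2, hw, hw'⟩ | ⟨hw, hw'⟩ | ⟨j, h1, h2, hw, hw'⟩ | ⟨-, hw'⟩
      · exact absurd hw (by simp)
      · obtain ⟨ha, hs⟩ := map_eq_some_pair.mp hw.symm
        obtain ⟨ha', ht⟩ := map_eq_some_pair.mp hw'.symm
        refine ⟨?_, Or.inr ⟨j, h1, h2, Or.inr ⟨ha', ha⟩⟩⟩
        rw [← hs, ← ht]
        intro he
        have := decide_eq_decide.mp he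
        omega
      · obtain ⟨ha, hs⟩ := map_eq_some_pair.mp hw.symm
        obtain ⟨ha', ht⟩ := map_eq_some_pair.mp hw'.symm
        have hxy : x = y := by
          have := ha.symm.trans ha'
          exact Option.some_inj.mp this
        exact ⟨by rw [← hs, ← ht]; simp, Or.inl ⟨hxy, ha⟩⟩
      · obtain ⟨ha, hs⟩ := map_eq_some_pair.mp hw.symm
        obtain ⟨ha', ht⟩ := map_eq_some_pair.mp hw'.symm
        refine ⟨?_, Or.inr ⟨j, h1, h2, Or.inl ⟨ha, ha'⟩⟩⟩
        rw [← hs, ← ht]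
        intro he
        have := decide_eq_decide.mp he
        omega
      · exact absurd hw' (by simp)
    · rcases h with ⟨hw, -⟩ | ⟨j, h1, h2, hw, hw'⟩ | ⟨hw, hw'⟩ | ⟨j, h1, h2, hw, hw'⟩ | ⟨-, hw'⟩
      · exact absurd hw (by simp)
      · obtain ⟨ha, ht⟩ := map_eq_some_pair.mp hw.symm
        obtain ⟨ha', hs⟩ := map_eq_some_pair.mp hw'.symm
        refine ⟨?_, Or.inr ⟨j, h1, h2, Or.inl ⟨ha', ha⟩⟩⟩
        rw [← hs, ← ht]
        intro he
        have := decide_eq_decide.mp he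
        omega
      · obtain ⟨ha, ht⟩ := map_eq_some_pair.mp hw.symm
        obtain ⟨ha', hs⟩ := map_eq_some_pair.mp hw'.symm
        have hxy : x = y := Option.some_inj.mp (ha'.symm.trans ha)
        exact ⟨by rw [← hs, ← ht]; simp, Or.inl ⟨hxy, ha'⟩⟩
      · obtain ⟨ha, ht⟩ := map_eq_some_pair.mp hw.symm
        obtain ⟨ha', hs⟩ := map_eq_some_pair.mp hw'.symm
        refine ⟨?_, Or.inr ⟨j, h1, h2, Or.inr ⟨ha, ha'⟩⟩⟩
        rw [← hs, ← ht]
        intro he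
        have := decide_eq_decide.mp he
        omega
      · exact absurd hw' (by simp)
  · rintro ⟨hst, ⟨rfl, hC1⟩ | ⟨j, h1, h2, hj | hj⟩⟩
    · cases s <;> cases t
      · exact absurd rfl hst
      · exact Or.inl (Or.inr (Or.inr (Or.inl ⟨by rw [hC1]; rfl, by rw [hC1]; rfl⟩)))
      · exact Or.inr (Or.inr (Or.inr (Or.inl ⟨by rw [hC1]; rfl, by rw [hC1]; rfl⟩)))
      · exact absurd rfl hst
    · -- C j = x, C (j+1) = y
      rcases Nat.mod_two_eq_zero_or_one j with hp | hp <;> cases s <;> cases t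
      · exact absurd rfl hst
      · -- s false t true, j even : d4 forward
        refine Or.inl (Or.inr (Or.inr (Or.inr (Or.inl ⟨j, h1, h2, ?_, ?_⟩))))
        · rw [hj.1, hp]; rfl
        · rw [hj.2, show (j+1) % 2 = 1 by omega]; rfl
      · -- s true t false, j even : d2 reversed
        refine Or.inr (Or.inr (Or.inl ⟨j, h1, h2, ?_, ?_⟩))
        · rw [hj.2, show (2*n-j) % 2 = 0 by omega]; rfl
        · rw [hj.1, show (2*n-j+1) % 2 = 1 by omega]; rfl
      · exact absurd rfl hst
      · exact absurd rfl hst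
      · -- s false t true, j odd : d2 reversed
        refine Or.inr (Or.inr (Or.inl ⟨j, h1, h2, ?_, ?_⟩))
        · rw [hj.2, show (2*n-j) % 2 = 1 by omega]; rfl
        · rw [hj.1, show (2*n-j+1) % 2 = 0 by omega]; rfl
      · -- s true t false, j odd : d4 forward
        refine Or.inl (Or.inr (Or.inr (Or.inr (Or.inl ⟨j, h1, h2, ?_, ?_⟩))))
        · rw [hj.1, hp]; rfl
        · rw [hj.2, show (j+1) % 2 = 0 by omega]; rfl
      · exact absurd rfl hst
    · -- C j = y, C (j+1) = x
      rcases Nat.mod_two_eq_zero_or_one j with hp | hp <;> cases s <;> cases t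
      · exact absurd rfl hst
      · -- s false t true: w=(x,false) w'=(y,true) : x at j+1, y at j : j even: d2 forward
        refine Or.inl (Or.inr (Or.inl ⟨j, h1, h2, ?_, ?_⟩))
        · rw [hj.2, show (2*n-j) % 2 = 0 by omega]; rfl
        · rw [hj.1, show (2*n-j+1) % 2 = 1 by omega]; rfl
      · -- s true t false: j even: d4 reversed
        refine Or.inr (Or.inr (Or.inr (Or.inr (Or.inl ⟨j, h1, h2, ?_, ?_⟩))))
        · rw [hj.1, hp]; rfl
        · rw [hj.2, show (j+1) % 2 = 1 by omega]; rfl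
      · exact absurd rfl hst
      · exact absurd rfl hst
      · -- s false t true: j odd: d4 reversed
        refine Or.inr (Or.inr (Or.inr (Or.inr (Or.inl ⟨j, h1, h2, ?_, ?_⟩))))
        · rw [hj.1, hp]; rfl
        · rw [hj.2, show (j+1) % 2 = 0 by omega]; rfl
      · -- s true t false: j odd: d2 forward
        refine Or.inl (Or.inr (Or.inl ⟨j, h1, h2, ?_, ?_⟩))
        · rw [hj.2, show (2*n-j) % 2 = 1 by omega]; rfl
        · rw [hj.1, show (2*n-j+1) % 2 = 0 by omega]; rfl
      · exact absurd rfl hst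

end shape

end DoublingAux

/-- the doubling construction yields an HCS of order `4n+1`. -/
theorem doubling_construction (n : ℕ) (hn : 1 ≤ n)
    (A B C : Fin n → ZMod (2*n+1) → Option (Fin (2*n)))
    (hAbij : ∀ i, Function.Bijective (A i))
    (hBbij : ∀ i, Function.Bijective (B i))
    (hCbij : ∀ i, Function.Bijective (C i))
    (hA0 : ∀ i, A i 0 = none) (hB0 : ∀ i, B i 0 = none) (hC0 : ∀ i, C i 0 = none)
    (hHA : IsHCS (Set.range fun i => cycleOn (2*n+1) (A i)))
    (hHB : IsHCS (Set.range fun i => cycleOn (2*n+1) (B i)))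
    (hHC : IsHCS (Set.range fun i => cycleOn (2*n+1) (C i)))
    (hfirst : ∀ i, A i 1 = B i 1 ∧ B i 1 = C i 1)
    (hlast : ∀ i, A i ((2*n : ℕ) : ZMod (2*n+1)) = B i ((2*n : ℕ) : ZMod (2*n+1)) ∧
      B i ((2*n : ℕ) : ZMod (2*n+1)) = C i ((2*n : ℕ) : ZMod (2*n+1))) :
    IsHCS ((Set.range fun i : Fin n => cycleOn (4*n+1) (doubleT1 n (A i) (B i))) ∪
      (Set.range fun i : Fin n => cycleOn (4*n+1) (doubleT2 n (C i)))) := by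
  classical
  open DoublingAux in
  haveI : NeZero (4*n+1) := ⟨by omega⟩
  have hcard : Fintype.card (Option (Fin (2*n))) = 2*n+1 := by simp
  have hAinj : Function.Injective (fun i => cycleOn (2*n+1) (A i)) :=
    hcs_index_injective hn hcard _ hHA
  have hBinj : Function.Injective (fun i => cycleOn (2*n+1) (B i)) :=
    hcs_index_injective hn hcard _ hHB
  have hCinj : Function.Injective (fun i => cycleOn (2*n+1) (C i)) :=
    hcs_index_injective hn hcard _ hHC
  have hAuniq : ∀ {a b : Option (Fin (2*n))} (i i' : Fin n),
      (cycleOn (2*n+1) (A i)).Adj a b → (cycleOn (2*n+1) (A i')).Adj a b → i = i' := by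
    intro a b i i' h h'
    have hab : s(a,b) ∈ (⊤ : SimpleGraph (Option (Fin (2*n)))).edgeSet := by
      rw [SimpleGraph.mem_edgeSet]
      exact h.ne
    obtain ⟨H, -, hu⟩ := hHA.2 _ hab
    have e1 := hu _ ⟨⟨i, rfl⟩, (SimpleGraph.mem_edgeSet _).mpr h⟩
    have e2 := hu _ ⟨⟨i', rfl⟩, (SimpleGraph.mem_edgeSet _).mpr h'⟩
    exact hAinj (e1.trans e2.symm)
  have hc1 : ((1:ℕ) : ZMod (2*n+1)) = (1 : ZMod (2*n+1)) := Nat.cast_one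
  have hf1 : ∀ i, A i ((1:ℕ) : ZMod (2*n+1)) = B i ((1:ℕ) : ZMod (2*n+1)) := by
    intro i; rw [hc1]; exact (hfirst i).1
  have hf2 : ∀ i, B i ((1:ℕ) : ZMod (2*n+1)) = C i ((1:ℕ) : ZMod (2*n+1)) := by
    intro i; rw [hc1]; exact (hfirst i).2
  have hl1 : ∀ i, A i ((2*n:ℕ) : ZMod (2*n+1)) = B i ((2*n:ℕ) : ZMod (2*n+1)) :=
    fun i => (hlast i).1
  have hl2 : ∀ i, B i ((2*n:ℕ) : ZMod (2*n+1)) = C i ((2*n:ℕ) : ZMod (2*n+1)) :=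
    fun i => (hlast i).2
  have hA1ne : ∀ (i : Fin n) (x : Fin (2*n)), A i ((1:ℕ) : ZMod (2*n+1)) = some x →
      A i ((2*n:ℕ) : ZMod (2*n+1)) = some x → False := by
    intro i x h1 h2
    have h3 := (hAbij i).1 (h1.trans h2.symm)
    have h4 := cast_inj_of_lt (m := 2*n+1) (by omega) (by omega) h3
    omega
  have hJxx : ∀ (i : Fin n) (x : Fin (2*n)), ¬ J n (C i) x x := by
    rintro i x ⟨j, h1, h2, ⟨ha, hb⟩ | ⟨ha, hb⟩⟩ <;>
    · have h3 := (hCbij i).1 (ha.trans hb.symm)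
      have h4 := cast_inj_of_lt (m := 2*n+1) (by omega) (by omega) h3
      omega
  -- adjacency from the A-system for a vertex adjacent to ∞
  have hAadj : ∀ (i : Fin n) (x : Fin (2*n)),
      (A i ((1:ℕ) : ZMod (2*n+1)) = some x ∨ A i ((2*n:ℕ) : ZMod (2*n+1)) = some x) →
      (cycleOn (2*n+1) (A i)).Adj none (some x) := by
    intro i x h
    exact (cyc_none_iff hn (hAbij i) (hA0 i)).mpr h
  have main : ∀ w w' : Option (Fin (2*n) × Bool), w ≠ w' →
      ∃! H, (H ∈ ((Set.range fun i : Fin n => cycleOn (4*n+1) (doubleT1 n (A i) (B i))) ∪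
        (Set.range fun i : Fin n => cycleOn (4*n+1) (doubleT2 n (C i)))) ∧ H.Adj w w') := by
    have hswap : ∀ w w' : Option (Fin (2*n) × Bool),
        (∃! H, (H ∈ ((Set.range fun i : Fin n => cycleOn (4*n+1) (doubleT1 n (A i) (B i))) ∪
          (Set.range fun i : Fin n => cycleOn (4*n+1) (doubleT2 n (C i)))) ∧ H.Adj w w')) →
        ∃! H, (H ∈ ((Set.range fun i : Fin n => cycleOn (4*n+1) (doubleT1 n (A i) (B i))) ∪
          (Set.range fun i : Fin n => cycleOn (4*n+1) (doubleT2 n (C i)))) ∧ H.Adj w' w) := by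
      rintro w w' ⟨H, ⟨h1, h2⟩, hu⟩
      exact ⟨H, ⟨h1, h2.symm⟩, fun H' hm => hu H' ⟨hm.1, hm.2.symm⟩⟩
    -- the key case : one endpoint is ∞
    have K1 : ∀ (x : Fin (2*n)) (s : Bool),
        ∃! H, (H ∈ ((Set.range fun i : Fin n => cycleOn (4*n+1) (doubleT1 n (A i) (B i))) ∪
          (Set.range fun i : Fin n => cycleOn (4*n+1) (doubleT2 n (C i)))) ∧
          H.Adj none (some (x, s))) := by
      intro x s
      have htop : s((none : Option (Fin (2*n))), some x) ∈
          (⊤ : SimpleGraph (Option (Fin (2*n)))).edgeSet := by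
        rw [SimpleGraph.mem_edgeSet]
        simp
      obtain ⟨H, ⟨⟨i, rfl⟩, hmem⟩, -⟩ := hHA.2 _ htop
      have hadj := (SimpleGraph.mem_edgeSet _).mp hmem
      rw [cyc_none_iff hn (hAbij i) (hA0 i)] at hadj
      -- uniqueness argument shared by both cases
      rcases hadj with h1 | h2
      · -- the T1 cycle of index i
        refine ⟨cycleOn (4*n+1) (doubleT1 n (A i) (B i)), ⟨Or.inl ⟨i, rfl⟩, ?_⟩, ?_⟩
        · rw [T1_none_iff hn (hAbij i) (hBbij i) (hA0 i) (hB0 i)]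
          cases s
          · exact Or.inr ⟨rfl, (hf1 i).symm.trans h1⟩
          · exact Or.inl ⟨rfl, h1⟩
        · rintro H' ⟨⟨i', rfl⟩ | ⟨i', rfl⟩, hadj'⟩
          · have h' := (T1_none_iff hn (hAbij i') (hBbij i') (hA0 i') (hB0 i')).mp hadj'
            have hx' : A i' ((1:ℕ) : ZMod (2*n+1)) = some x := by
              rcases h' with ⟨-, h'⟩ | ⟨-, h'⟩
              · exact h'
              · exact (hf1 i').trans h'
            have : i' = i := hAuniq i' i (hAadj i' x (Or.inl hx')) (hAadj i x (Or.inl h1))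
            rw [this]
          · have h' := (T2_none_iff hn (hCbij i') (hC0 i')).mp hadj'
            have hx' : A i' ((2*n:ℕ) : ZMod (2*n+1)) = some x :=
              ((hl1 i').trans (hl2 i')).symm ▸ h'
            have hii : i' = i := hAuniq i' i (hAadj i' x (Or.inr hx')) (hAadj i x (Or.inl h1))
            exact absurd (hA1ne i x h1 (hii ▸ hx')) id
      · -- the T2 cycle of index i
        refine ⟨cycleOn (4*n+1) (doubleT2 n (C i)), ⟨Or.inr ⟨i, rfl⟩, ?_⟩, ?_⟩
        · rw [T2_none_iff hn (hCbij i) (hC0 i)]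
          exact ((hl1 i).trans (hl2 i)).symm.trans h2
        · rintro H' ⟨⟨i', rfl⟩ | ⟨i', rfl⟩, hadj'⟩
          · have h' := (T1_none_iff hn (hAbij i') (hBbij i') (hA0 i') (hB0 i')).mp hadj'
            have hx' : A i' ((1:ℕ) : ZMod (2*n+1)) = some x := by
              rcases h' with ⟨-, h'⟩ | ⟨-, h'⟩
              · exact h'
              · exact (hf1 i').trans h'
            have hii : i' = i := hAuniq i' i (hAadj i' x (Or.inl hx')) (hAadj i x (Or.inr h2))
            exact absurd (hA1ne i x (hii ▸ hx') h2) id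
          · have h' := (T2_none_iff hn (hCbij i') (hC0 i')).mp hadj'
            have hx' : A i' ((2*n:ℕ) : ZMod (2*n+1)) = some x :=
              ((hl1 i').trans (hl2 i')).symm ▸ h'
            have : i' = i := hAuniq i' i (hAadj i' x (Or.inr hx')) (hAadj i x (Or.inr h2))
            rw [this]
    intro w w' hne
    match w, w' with
    | none, none => exact absurd rfl hne
    | none, some (x, s) => exact K1 x s
    | some (x, s), none => exact hswap _ _ (K1 x s)
    | some (x, s), some (y, t) =>
      by_cases hst : s = t
      · -- same sign : pure edges
        subst hst
        have hxy : x ≠ y := by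
          intro h
          exact hne (by rw [h])
        cases s
        · -- both minus : B-system
          have htop : s((some x : Option (Fin (2*n))), some y) ∈
              (⊤ : SimpleGraph (Option (Fin (2*n)))).edgeSet := by
            rw [SimpleGraph.mem_edgeSet]
            simp [hxy]
          obtain ⟨H, ⟨⟨i, rfl⟩, hmem⟩, -⟩ := hHB.2 _ htop
          have hadj := (SimpleGraph.mem_edgeSet _).mp hmem
          have hJ : J n (B i) x y := (cyc_some_iff hn (hBbij i) (hB0 i)).mp hadj
          refine ⟨cycleOn (4*n+1) (doubleT1 n (A i) (B i)), ⟨Or.inl ⟨i, rfl⟩, ?_⟩, ?_⟩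
          · rw [T1_some_iff hn (hAbij i) (hBbij i) (hA0 i) (hB0 i)]
            exact Or.inr (Or.inl ⟨rfl, rfl, hJ⟩)
          · rintro H' ⟨⟨i', rfl⟩ | ⟨i', rfl⟩, hadj'⟩
            · have h' := (T1_some_iff hn (hAbij i') (hBbij i') (hA0 i') (hB0 i')).mp hadj'
              rcases h' with ⟨h, -⟩ | ⟨-, -, hJ'⟩ | ⟨h, -⟩ | ⟨-, h, -⟩
              · exact Bool.noConfusion h
              · have hadjB' := (cyc_some_iff hn (hBbij i') (hB0 i')).mpr hJ'
                have hBuniq : i' = i := by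
                  have hab : s((some x : Option (Fin (2*n))), some y) ∈
                      (⊤ : SimpleGraph (Option (Fin (2*n)))).edgeSet := htop
                  obtain ⟨H0, -, hu⟩ := hHB.2 _ hab
                  have e1 := hu _ ⟨⟨i', rfl⟩, (SimpleGraph.mem_edgeSet _).mpr hadjB'⟩
                  have e2 := hu _ ⟨⟨i, rfl⟩, (SimpleGraph.mem_edgeSet _).mpr hadj⟩
                  exact hBinj (e1.trans e2.symm)
                rw [hBuniq]
              · exact Bool.noConfusion h
              · exact Bool.noConfusion h
            · have h' := (T2_some_iff hn (hCbij i') (hC0 i')).mp hadj'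
              exact absurd rfl h'.1
        · -- both plus : A-system
          have htop : s((some x : Option (Fin (2*n))), some y) ∈
              (⊤ : SimpleGraph (Option (Fin (2*n)))).edgeSet := by
            rw [SimpleGraph.mem_edgeSet]
            simp [hxy]
          obtain ⟨H, ⟨⟨i, rfl⟩, hmem⟩, -⟩ := hHA.2 _ htop
          have hadj := (SimpleGraph.mem_edgeSet _).mp hmem
          have hJ : J n (A i) x y := (cyc_some_iff hn (hAbij i) (hA0 i)).mp hadj
          refine ⟨cycleOn (4*n+1) (doubleT1 n (A i) (B i)), ⟨Or.inl ⟨i, rfl⟩, ?_⟩, ?_⟩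
          · rw [T1_some_iff hn (hAbij i) (hBbij i) (hA0 i) (hB0 i)]
            exact Or.inl ⟨rfl, rfl, hJ⟩
          · rintro H' ⟨⟨i', rfl⟩ | ⟨i', rfl⟩, hadj'⟩
            · have h' := (T1_some_iff hn (hAbij i') (hBbij i') (hA0 i') (hB0 i')).mp hadj'
              rcases h' with ⟨-, -, hJ'⟩ | ⟨h, -⟩ | ⟨-, h, -⟩ | ⟨h, -⟩
              · have hadjA' := (cyc_some_iff hn (hAbij i') (hA0 i')).mpr hJ'
                have : i' = i := hAuniq i' i hadjA' hadj
                rw [this]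
              · exact Bool.noConfusion h
              · exact Bool.noConfusion h
              · exact Bool.noConfusion h
            · have h' := (T2_some_iff hn (hCbij i') (hC0 i')).mp hadj'
              exact absurd rfl h'.1
      · -- mixed signs
        by_cases hxy : x = y
        · -- vertical edge
          subst hxy
          have htop : s((none : Option (Fin (2*n))), some x) ∈
              (⊤ : SimpleGraph (Option (Fin (2*n)))).edgeSet := by
            rw [SimpleGraph.mem_edgeSet]
            simp
          obtain ⟨H, ⟨⟨i, rfl⟩, hmem⟩, -⟩ := hHA.2 _ htop
          have hadj := (SimpleGraph.mem_edgeSet _).mp hmem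
          rw [cyc_none_iff hn (hAbij i) (hA0 i)] at hadj
          rcases hadj with h1 | h2
          · -- A i 1 = x : the T2 cycle
            refine ⟨cycleOn (4*n+1) (doubleT2 n (C i)), ⟨Or.inr ⟨i, rfl⟩, ?_⟩, ?_⟩
            · rw [T2_some_iff hn (hCbij i) (hC0 i)]
              exact ⟨hst, Or.inl ⟨rfl, ((hf1 i).trans (hf2 i)).symm.trans h1⟩⟩
            · rintro H' ⟨⟨i', rfl⟩ | ⟨i', rfl⟩, hadj'⟩
              · have h' := (T1_some_iff hn (hAbij i') (hBbij i') (hA0 i') (hB0 i')).mp hadj'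
                have hx' : A i' ((2*n:ℕ) : ZMod (2*n+1)) = some x := by
                  rcases h' with ⟨rfl, rfl, -⟩ | ⟨rfl, rfl, -⟩ | ⟨-, -, h, -⟩ | ⟨-, -, -, h⟩
                  · exact absurd rfl hst
                  · exact absurd rfl hst
                  · exact h
                  · exact h
                have hii : i' = i :=
                  hAuniq i' i (hAadj i' x (Or.inr hx')) (hAadj i x (Or.inl h1))
                exact absurd (hA1ne i x h1 (hii ▸ hx')) id
              · have h' := (T2_some_iff hn (hCbij i') (hC0 i')).mp hadj'
                have hx' : C i' ((1:ℕ) : ZMod (2*n+1)) = some x := by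
                  rcases h'.2 with ⟨-, h⟩ | hJ'
                  · exact h
                  · exact absurd hJ' (hJxx i' x)
                have hx'' : A i' ((1:ℕ) : ZMod (2*n+1)) = some x :=
                  ((hf1 i').trans (hf2 i')).symm ▸ hx'
                have : i' = i :=
                  hAuniq i' i (hAadj i' x (Or.inl hx'')) (hAadj i x (Or.inl h1))
                rw [this]
          · -- A i 2n = x : the T1 cycle
            refine ⟨cycleOn (4*n+1) (doubleT1 n (A i) (B i)), ⟨Or.inl ⟨i, rfl⟩, ?_⟩, ?_⟩
            · rw [T1_some_iff hn (hAbij i) (hBbij i) (hA0 i) (hB0 i)]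
              cases s <;> cases t
              · exact absurd rfl hst
              · exact Or.inr (Or.inr (Or.inr ⟨rfl, rfl, (hl1 i).symm.trans h2, h2⟩))
              · exact Or.inr (Or.inr (Or.inl ⟨rfl, rfl, h2, (hl1 i).symm.trans h2⟩))
              · exact absurd rfl hst
            · rintro H' ⟨⟨i', rfl⟩ | ⟨i', rfl⟩, hadj'⟩
              · have h' := (T1_some_iff hn (hAbij i') (hBbij i') (hA0 i') (hB0 i')).mp hadj'
                have hx' : A i' ((2*n:ℕ) : ZMod (2*n+1)) = some x := by
                  rcases h' with ⟨rfl, rfl, -⟩ | ⟨rfl, rfl, -⟩ | ⟨-, -, h, -⟩ | ⟨-, -, h, -⟩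
                  · exact absurd rfl hst
                  · exact absurd rfl hst
                  · exact h
                  · exact (hl1 i').trans h
                have : i' = i :=
                  hAuniq i' i (hAadj i' x (Or.inr hx')) (hAadj i x (Or.inr h2))
                rw [this]
              · have h' := (T2_some_iff hn (hCbij i') (hC0 i')).mp hadj'
                have hx' : C i' ((1:ℕ) : ZMod (2*n+1)) = some x := by
                  rcases h'.2 with ⟨-, h⟩ | hJ'
                  · exact h
                  · exact absurd hJ' (hJxx i' x)
                have hx'' : A i' ((1:ℕ) : ZMod (2*n+1)) = some x :=
                  ((hf1 i').trans (hf2 i')).symm ▸ hx'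
                have hii : i' = i :=
                  hAuniq i' i (hAadj i' x (Or.inl hx'')) (hAadj i x (Or.inr h2))
                exact absurd (hA1ne i x (hii ▸ hx'') h2) id
        · -- mixed signs, distinct vertices : C-system
          have htop : s((some x : Option (Fin (2*n))), some y) ∈
              (⊤ : SimpleGraph (Option (Fin (2*n)))).edgeSet := by
            rw [SimpleGraph.mem_edgeSet]
            simp [hxy]
          obtain ⟨H, ⟨⟨i, rfl⟩, hmem⟩, -⟩ := hHC.2 _ htop
          have hadj := (SimpleGraph.mem_edgeSet _).mp hmem
          have hJ : J n (C i) x y := (cyc_some_iff hn (hCbij i) (hC0 i)).mp hadj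
          refine ⟨cycleOn (4*n+1) (doubleT2 n (C i)), ⟨Or.inr ⟨i, rfl⟩, ?_⟩, ?_⟩
          · rw [T2_some_iff hn (hCbij i) (hC0 i)]
            exact ⟨hst, Or.inr hJ⟩
          · rintro H' ⟨⟨i', rfl⟩ | ⟨i', rfl⟩, hadj'⟩
            · have h' := (T1_some_iff hn (hAbij i') (hBbij i') (hA0 i') (hB0 i')).mp hadj'
              exfalso
              rcases h' with ⟨rfl, rfl, -⟩ | ⟨rfl, rfl, -⟩ | ⟨-, -, ha, hb⟩ | ⟨-, -, ha, hb⟩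
              · exact hst rfl
              · exact hst rfl
              · exact hxy (Option.some_inj.mp (((hl1 i').symm.trans ha).symm.trans hb))
              · exact hxy (Option.some_inj.mp (((hl1 i').trans ha).symm.trans hb))
            · have h' := (T2_some_iff hn (hCbij i') (hC0 i')).mp hadj'
              rcases h'.2 with ⟨h, -⟩ | hJ'
              · exact absurd h hxy
              · have hadjC' := (cyc_some_iff hn (hCbij i') (hC0 i')).mpr hJ'
                have : i' = i := by
                  obtain ⟨H0, -, hu⟩ := hHC.2 _ htop
                  have e1 := hu _ ⟨⟨i', rfl⟩, (SimpleGraph.mem_edgeSet _).mpr hadjC'⟩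
                  have e2 := hu _ ⟨⟨i, rfl⟩, (SimpleGraph.mem_edgeSet _).mpr hadj⟩
                  exact hCinj (e1.trans e2.symm)
                rw [this]
  constructor
  · rintro H (⟨i, rfl⟩ | ⟨i, rfl⟩)
    · exact cycleOn_isHamCycle (by omega) (by omega)
        (DoublingAux.doubleT1_bijective hn (hAbij i) (hBbij i) (hA0 i) (hB0 i))
    · exact cycleOn_isHamCycle (by omega) (by omega)
        (DoublingAux.doubleT2_bijective hn (hCbij i) (hC0 i))
  · intro e he
    revert he
    refine Sym2.ind (fun w w' he => ?_) e
    have hne : w ≠ w' := by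
      rw [SimpleGraph.mem_edgeSet] at he
      exact he.ne
    exact main w w' hne
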